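/- arXiv:1109.2815 — 2 statements merged into one kernel-verified Lean document; each statement's English description precedes it below -/
import Mathlib

section
/- Let R = k[x,y,z] be the standard graded polynomial ring over a field k and let I ⊆ R be a homogeneous ideal of codimension 2 generated by 3 linearly independent forms of degree d ≥ 1 such that I_d = (I^sat)_d. If the ideal I^sat is integrally closed, then I^sat equals the integral closure Ī of I. (In particular, for a plane rational map without fixed part whose base ideal I satisfies I_d = (I^sat)_d, if the fat ideal ⋂_j ℘_j^{μ_j} associated to the proper base points equals I^sat, then that fat ideal is the integral closure of I.) -/
open MvPolynomial

/-- `R = k[x₀,x₁,x₂]`, the standard graded polynomial ring in three variables. -/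
abbrev Rk (k : Type) [Field k] := MvPolynomial (Fin 3) k

/-- The irrelevant maximal ideal `m = (x₀,x₁,x₂)`. -/
noncomputable def mm (k : Type) [Field k] : Ideal (Rk k) :=
  Ideal.span (Set.range X)

/-- The saturation `I^sat = I : m^∞`. -/
noncomputable def sat {k : Type} [Field k] (I : Ideal (Rk k)) : Ideal (Rk k) :=
  ⨆ s : ℕ, Submodule.colon I (((mm k) ^ s : Ideal (Rk k)) : Set (Rk k))

/-- `f` is homogeneous of (integer) degree `n`; for `n < 0` this means `f = 0`. -/
def HomZ {k : Type} [Field k] (f : Rk k) (n : ℤ) : Prop :=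
  if 0 ≤ n then f.IsHomogeneous n.toNat else f = 0

/-- `k`-dimension of the degree-`μ` graded piece of a homogeneous ideal
(`0` in negative degrees). -/
noncomputable def pieceDim {k : Type} [Field k] (J : Ideal (Rk k)) (μ : ℤ) : ℕ :=
  if 0 ≤ μ then Module.finrank k
    ↥((homogeneousSubmodule (Fin 3) k μ.toNat) ⊓ (Submodule.restrictScalars k J))
  else 0

/-- The height (codimension) of an ideal: the infimum of the heights of the
prime ideals containing it. -/
noncomputable def htI {A : Type} [CommRing A] (I : Ideal A) : ℕ∞ :=
  ⨅ (p : PrimeSpectrum A) (_ : I ≤ p.asIdeal), Order.height p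

/-- `x` is integral over the ideal `I`: it satisfies an equation of integral
dependence `x^m + a₁ x^{m-1} + ⋯ + a_m = 0` with `a_i ∈ I^i`.  The integral
closure of `I` is the set of all such elements. -/
def IdealIntegral {A : Type} [CommRing A] (I : Ideal A) (x : A) : Prop :=
  ∃ (m : ℕ) (a : Fin m → A), 0 < m ∧ (∀ i : Fin m, a i ∈ I ^ ((i : ℕ) + 1)) ∧
    x ^ m + ∑ i : Fin m, a i * x ^ (m - ((i : ℕ) + 1)) = 0

namespace Stmt15

variable {k : Type} [Field k]


lemma deg_single (i : Fin 3) (t : ℕ) : (Finsupp.single i t).degree = t := by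
  rcases eq_or_ne t 0 with rfl | h
  · simp [Finsupp.degree]
  · exact Finsupp.degree_single i t

lemma deg_add (a b : Fin 3 →₀ ℕ) : (a + b).degree = a.degree + b.degree := by
  simp [Finsupp.degree_eq_weight_one, map_add]

/-- key component-of-product lemma -/
lemma hcomp_mul (c f : Rk k) {d' : ℕ} (hf : f.IsHomogeneous d') (N : ℕ) :
    homogeneousComponent N (c * f) =
      if d' ≤ N then homogeneousComponent (N - d') c * f else 0 := by
  conv_lhs => rw [← sum_homogeneousComponent c, Finset.sum_mul, map_sum]
  have hterm : ∀ j, homogeneousComponent N (homogeneousComponent j c * f)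
      = if N = j + d' then homogeneousComponent j c * f else 0 := by
    intro j
    exact homogeneousComponent_of_mem
      ((mem_homogeneousSubmodule _ _).mpr
        (((homogeneousComponent_isHomogeneous j c)).mul hf))
  by_cases hd : d' ≤ N
  · rw [if_pos hd]
    rw [Finset.sum_congr rfl fun j _ => hterm j]
    rw [Finset.sum_eq_single (N - d')]
    · rw [if_pos (by omega)]
    · intro b _ hb
      rw [if_neg (by omega)]
    · intro hNd
      rw [if_pos (by omega)]
      have : homogeneousComponent (N - d') c = 0 :=
        homogeneousComponent_eq_zero _ _ (by
          simp only [Finset.mem_range, not_lt] at hNd; omega)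
      rw [this, zero_mul]
  · rw [if_neg hd]
    rw [Finset.sum_congr rfl fun j _ => hterm j]
    apply Finset.sum_eq_zero
    intro j _
    rw [if_neg (by omega)]

lemma hcomp_self {n : ℕ} {p : Rk k} (hp : p.IsHomogeneous n) :
    homogeneousComponent n p = p := by
  rw [homogeneousComponent_of_mem ((mem_homogeneousSubmodule _ _).mpr hp), if_pos rfl]

lemma mem_mm_of_cc (g : Rk k) (hg : constantCoeff g = 0) : g ∈ mm k := by
  have key : ∀ p : Rk k, p - C (constantCoeff p) ∈ mm k := by
    intro p
    induction p using MvPolynomial.induction_on with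
    | C a => simp
    | add p q hp hq =>
      have : p + q - C (constantCoeff (p + q))
          = (p - C (constantCoeff p)) + (q - C (constantCoeff q)) := by
        rw [map_add, map_add]; ring
      rw [this]; exact Ideal.add_mem _ hp hq
    | mul_X p i hp =>
      have : p * X i - C (constantCoeff (p * X i)) = p * X i := by
        simp [constantCoeff_X]
      rw [this]
      exact Ideal.mul_mem_left _ p (Ideal.subset_span ⟨i, rfl⟩)
  have := key g
  rwa [hg, map_zero, sub_zero] at this

lemma cc_of_mem_mm (g : Rk k) (hg : g ∈ mm k) : constantCoeff g = 0 := by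
  have : mm k ≤ RingHom.ker (constantCoeff (R := k) (σ := Fin 3)) := by
    rw [mm, Ideal.span_le]
    rintro _ ⟨i, rfl⟩
    simp [RingHom.mem_ker]
  simpa [RingHom.mem_ker] using this hg

lemma mm_eq_ker : mm k = RingHom.ker (constantCoeff (R := k) (σ := Fin 3)) := by
  apply le_antisymm
  · intro g hg; simpa [RingHom.mem_ker] using cc_of_mem_mm g hg
  · intro g hg; exact mem_mm_of_cc g (by simpa [RingHom.mem_ker] using hg)

lemma mm_isPrime : (mm k).IsPrime := by
  rw [mm_eq_ker]; exact RingHom.ker_isPrime _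

/-- every homogeneous polynomial of degree t lies in mm^t -/
lemma homog_mem_pow {t : ℕ} : ∀ (q : Rk k), q.IsHomogeneous t → q ∈ (mm k) ^ t := by
  induction t with
  | zero => intro q _; simp
  | succ t ih =>
    intro q hq
    have hcc : constantCoeff q = 0 := by
      rw [MvPolynomial.constantCoeff_eq]
      exact hq.coeff_eq_zero (by simp)
    obtain ⟨c, hc⟩ := Ideal.mem_span_range_iff_exists_fun.mp (mem_mm_of_cc q hcc)
    have hq' : q = ∑ i, homogeneousComponent t (c i) * X i := by
      have := hcomp_self hq
      conv_lhs => rw [← this, ← hc, map_sum]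
      refine Finset.sum_congr rfl fun i _ => ?_
      rw [hcomp_mul _ _ (isHomogeneous_X _ _) (t+1), if_pos (by omega)]
      norm_num
    rw [hq', pow_succ]
    refine Ideal.sum_mem _ fun i _ => ?_
    exact Ideal.mul_mem_mul (ih _ (homogeneousComponent_isHomogeneous t (c i)))
      (Ideal.subset_span ⟨i, rfl⟩)

/-- mm^s is spanned by the monic monomials of degree s -/
lemma pow_mm_eq_span (s : ℕ) :
    (mm k) ^ s = Ideal.span {p : Rk k | ∃ σ : Fin 3 →₀ ℕ, σ.degree = s ∧ p = monomial σ 1} := by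
  apply le_antisymm
  · induction s with
    | zero =>
      rw [pow_zero, Ideal.one_eq_top]
      have h1 : (1 : Rk k) ∈ {p : Rk k | ∃ σ : Fin 3 →₀ ℕ, σ.degree = 0 ∧ p = monomial σ 1} :=
        ⟨0, by simp [Finsupp.degree], by simp⟩
      rw [← Ideal.span_eq (⊤ : Ideal (Rk k))]
      exact le_trans (by rw [Ideal.span_eq]; exact le_of_eq (Ideal.eq_top_iff_one _ |>.mpr
        (Ideal.subset_span h1)).symm) (le_refl _)
    | succ s ih =>
      rw [pow_succ]
      calc (mm k) ^ s * mm k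
          ≤ Ideal.span {p : Rk k | ∃ σ : Fin 3 →₀ ℕ, σ.degree = s ∧ p = monomial σ 1}
            * Ideal.span (Set.range X) := Ideal.mul_mono ih (le_of_eq rfl)
        _ ≤ _ := by
            rw [Ideal.span_mul_span']
            apply Ideal.span_le.mpr
            rintro _ ⟨a, ⟨σ, hσ, rfl⟩, b, ⟨i, rfl⟩, rfl⟩
            apply Ideal.subset_span
            refine ⟨σ + Finsupp.single i 1, ?_, ?_⟩
            · rw [deg_add, hσ, deg_single]
            · simp [X, monomial_mul]
  · apply Ideal.span_le.mpr
    rintro _ ⟨σ, hσ, rfl⟩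
    exact homog_mem_pow _ (isHomogeneous_monomial _ hσ)





section SatBasics

variable {I : Ideal (Rk k)}

lemma colon_mono_pow {u v : ℕ} (huv : u ≤ v) :
    Submodule.colon I (((mm k) ^ u : Ideal (Rk k)) : Set (Rk k)) ≤ Submodule.colon I (((mm k) ^ v : Ideal (Rk k)) : Set (Rk k)) := by
  intro r hr
  rw [Submodule.mem_colon] at hr ⊢
  intro p hp
  exact hr p (Ideal.pow_le_pow_right huv hp)

lemma sat_exists {x : Rk k} (hx : x ∈ sat I) :
    ∃ s, x ∈ Submodule.colon I (((mm k) ^ s : Ideal (Rk k)) : Set (Rk k)) := by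
  refine Submodule.iSup_induction (motive := fun y => ∃ s, y ∈ Submodule.colon I (((mm k) ^ s : Ideal (Rk k)) : Set (Rk k)))
    _ hx (fun s y hy => ⟨s, hy⟩) ⟨0, Submodule.zero_mem _⟩ ?_
  rintro a b ⟨s1, h1⟩ ⟨s2, h2⟩
  exact ⟨max s1 s2, Submodule.add_mem _ (colon_mono_pow (le_max_left _ _) h1)
    (colon_mono_pow (le_max_right _ _) h2)⟩

lemma colon_le_sat (s : ℕ) : Submodule.colon I (((mm k) ^ s : Ideal (Rk k)) : Set (Rk k)) ≤ sat I := by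
  rw [sat]; exact le_iSup (fun s => Submodule.colon I (((mm k) ^ s : Ideal (Rk k)) : Set (Rk k))) s

lemma I_le_sat : I ≤ sat I := by
  refine le_trans ?_ (colon_le_sat 0)
  intro r hr
  rw [Submodule.mem_colon]
  intro p _
  rw [smul_eq_mul]
  exact Ideal.mul_mem_right _ _ hr

end SatBasics

section WithGens

variable {I : Ideal (Rk k)} {d : ℕ} {f : Fin 3 → Rk k}
  (hIf : I = Ideal.span (Set.range f)) (hfhom : ∀ i, (f i).IsHomogeneous d)

include hIf hfhom

lemma comp_mem {y : Rk k} (hy : y ∈ I) (n : ℕ) : homogeneousComponent n y ∈ I := by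
  obtain ⟨c, hc⟩ := Ideal.mem_span_range_iff_exists_fun.mp (hIf ▸ hy)
  rw [← hc, map_sum]
  refine Ideal.sum_mem _ fun i _ => ?_
  rw [hcomp_mul _ _ (hfhom i)]
  split
  · exact Ideal.mul_mem_left _ _ (hIf ▸ Ideal.subset_span ⟨i, rfl⟩)
  · exact I.zero_mem

lemma homog_decomp {y : Rk k} {n : ℕ} (hy : y ∈ I) (hyh : y.IsHomogeneous n) (hdn : d ≤ n) :
    ∃ c : Fin 3 → Rk k, (∀ i, (c i).IsHomogeneous (n - d)) ∧ ∑ i, c i * f i = y := by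
  obtain ⟨c', hc'⟩ := Ideal.mem_span_range_iff_exists_fun.mp (hIf ▸ hy)
  refine ⟨fun i => homogeneousComponent (n - d) (c' i),
    fun i => homogeneousComponent_isHomogeneous _ _, ?_⟩
  have key : ∑ i, homogeneousComponent (n - d) (c' i) * f i
      = homogeneousComponent n (∑ i, c' i * f i) := by
    rw [map_sum]
    refine Finset.sum_congr rfl fun i _ => ?_
    rw [hcomp_mul _ _ (hfhom i) n, if_pos hdn]
  rw [key, hc', hcomp_self hyh]

lemma mem_span_k {y : Rk k} (hy : y ∈ I) (hyh : y.IsHomogeneous d) :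
    y ∈ Submodule.span k (Set.range f) := by
  obtain ⟨c, hch, hcs⟩ := homog_decomp hIf hfhom hy hyh le_rfl
  rw [← hcs]
  refine Submodule.sum_mem _ fun i _ => ?_
  have h0 : c i = C (coeff 0 (c i)) := by
    have h1 : (c i).IsHomogeneous 0 := by simpa using hch i
    rw [← homogeneousComponent_zero, hcomp_self h1]
  rw [h0, ← smul_eq_C_mul]
  exact Submodule.smul_mem _ _ (Submodule.subset_span ⟨i, rfl⟩)

end WithGens





/-- The chain ⊥ < ker τ₁ < ker τ₂ < mm shows every prime containing mm has height ≥ 3. -/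
lemma three_le_height_of_mm_le (P : PrimeSpectrum (Rk k)) (hP : mm k ≤ P.asIdeal) :
    3 ≤ Order.height P := by
  classical
  set τ1 : Rk k →ₐ[k] Rk k := aeval ![0, X 1, X 2] with hτ1
  set τ2 : Rk k →ₐ[k] Rk k := aeval ![0, 0, X 2] with hτ2
  have hτ1X0 : τ1 (X 0) = 0 := by simp [hτ1]
  have hτ1X1 : τ1 (X 1) = X 1 := by simp [hτ1]
  have hτ2X1 : τ2 (X 1) = 0 := by simp [hτ2]
  have hτ2X2 : τ2 (X 2) = X 2 := by simp [hτ2]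
  let p0 : PrimeSpectrum (Rk k) := ⟨⊥, Ideal.bot_prime⟩
  let p1 : PrimeSpectrum (Rk k) := ⟨RingHom.ker τ1, RingHom.ker_isPrime _⟩
  let p2 : PrimeSpectrum (Rk k) := ⟨RingHom.ker τ2, RingHom.ker_isPrime _⟩
  let p3 : PrimeSpectrum (Rk k) := ⟨mm k, mm_isPrime⟩
  have h01 : p0 < p1 := by
    show (⊥ : Ideal (Rk k)) < RingHom.ker τ1
    refine Ne.bot_lt' (Ne.symm ?_)
    intro hbot
    have : X 0 ∈ RingHom.ker τ1 := by rw [RingHom.mem_ker]; exact hτ1X0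
    rw [hbot] at this
    exact X_ne_zero (σ := Fin 3) (R := k) 0 ((Submodule.mem_bot _).mp this)
  have h12 : p1 < p2 := by
    show RingHom.ker τ1 < RingHom.ker τ2
    have hfac : (aeval ![X 0, 0, X 2] : Rk k →ₐ[k] Rk k).comp τ1 = τ2 := by
      apply MvPolynomial.algHom_ext
      intro i
      fin_cases i <;> simp [hτ1, hτ2]
    rw [SetLike.lt_iff_le_and_exists]
    constructor
    · intro g hg
      rw [RingHom.mem_ker] at hg ⊢
      rw [← hfac]
      simp [AlgHom.comp_apply, hg]
    · refine ⟨X 1, by rw [RingHom.mem_ker]; exact hτ2X1, ?_⟩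
      rw [RingHom.mem_ker, hτ1X1]
      exact X_ne_zero 1
  have h23 : p2 < p3 := by
    show RingHom.ker τ2 < mm k
    rw [SetLike.lt_iff_le_and_exists]
    constructor
    · intro g hg
      rw [RingHom.mem_ker] at hg
      apply mem_mm_of_cc
      have hcc : (constantCoeff (R := k) (σ := Fin 3)).comp (τ2 : Rk k →+* Rk k)
          = constantCoeff := by
        apply MvPolynomial.ringHom_ext
        · intro a; simp [hτ2]
        · intro i; fin_cases i <;> simp [hτ2]
      have h2 : constantCoeff (τ2 g) = constantCoeff g := by
        conv_rhs => rw [← hcc]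
        rfl
      rw [← h2, hg, map_zero]
    · exact ⟨X 2, Ideal.subset_span ⟨2, rfl⟩, by rw [RingHom.mem_ker, hτ2X2]; exact X_ne_zero 2⟩
  let series : LTSeries (PrimeSpectrum (Rk k)) :=
    ⟨3, ![p0, p1, p2, p3], by
      intro i
      fin_cases i
      · exact h01
      · exact h12
      · exact h23⟩
  have hlast : series.last = p3 := rfl
  have hle : series.last ≤ P := by
    rw [hlast]
    exact hP
  have := Order.length_le_height hle
  have h3 : series.length = 3 := rfl
  rw [h3] at this
  exact_mod_cast this





section LowDeg

variable {I : Ideal (Rk k)} {d : ℕ} {f : Fin 3 → Rk k}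

/-- a prime generated by one irreducible element has height at most 1 -/
lemma height_span_irreducible_le_one {q : Rk k} (hqirr : Irreducible q)
    (hP : (Ideal.span {q}).IsPrime) :
    Order.height (⟨Ideal.span {q}, hP⟩ : PrimeSpectrum (Rk k)) ≤ 1 := by
  set P : PrimeSpectrum (Rk k) := ⟨Ideal.span {q}, hP⟩
  have key : ∀ B : PrimeSpectrum (Rk k), B < P → B.asIdeal = ⊥ := by
    intro B hB
    by_contra hBne
    obtain ⟨a, haB, ha0⟩ := (Submodule.ne_bot_iff _).mp hBne
    obtain ⟨n, b, hqb, rfl⟩ := WfDvdMonoid.max_power_factor ha0 hqirr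
    have hqB : q ∉ B.asIdeal := by
      intro hq
      have hPB : P.asIdeal ≤ B.asIdeal :=
        Ideal.span_le.mpr (Set.singleton_subset_iff.mpr hq)
      exact absurd hPB (not_le_of_gt hB)
    rcases B.isPrime.mem_or_mem haB with h | h
    · exact hqB (B.isPrime.mem_of_pow_mem n h)
    · have : b ∈ Ideal.span {q} := hB.le h
      exact hqb (Ideal.mem_span_singleton.mp this)
  rw [Order.height_eq_iSup_lt_height]
  refine iSup₂_le fun B hB => ?_
  have hmin : IsMin B := by
    intro C hC
    have : C.asIdeal ≤ B.asIdeal := hC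
    rw [key B hB] at this
    have hC0 : C.asIdeal = ⊥ := le_bot_iff.mp this
    show B.asIdeal ≤ C.asIdeal
    rw [key B hB, hC0]
  rw [Order.height_eq_zero.mpr hmin, zero_add]

theorem low_deg (hd : 1 ≤ d) (hht : htI I = 2)
    (hfhom : ∀ i, (f i).IsHomogeneous d)
    (hfli : LinearIndependent k f) (hIf : I = Ideal.span (Set.range f))
    (hdeq : ∀ h : Rk k, h.IsHomogeneous d → (h ∈ I ↔ h ∈ sat I)) :
    ∀ (e : ℕ) (g : Rk k), g.IsHomogeneous e → g ∈ sat I → g ≠ 0 → d ≤ e := by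
  intro e g hghom hgsat hg0
  by_contra hcon
  push_neg at hcon
  -- dimension facts
  have finW : FiniteDimensional k (Submodule.span k (Set.range f)) :=
    FiniteDimensional.span_of_finite k (Set.finite_range f)
  have hfrW : Module.finrank k (Submodule.span k (Set.range f)) = 3 := by
    rw [finrank_span_eq_card hfli]; simp
  rcases Nat.eq_zero_or_pos e with he0 | hepos
  · -- case e = 0 : g is a nonzero constant, so m^s ⊆ I, so every prime over I contains m
    subst he0
    obtain ⟨c, rfl⟩ : ∃ c, g = C c := by
      refine ⟨coeff 0 g, ?_⟩
      rw [← homogeneousComponent_zero, hcomp_self hghom]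
    have hc0 : c ≠ 0 := fun h => hg0 (by rw [h, map_zero])
    have h1sat : (1 : Rk k) ∈ sat I := by
      have : C (σ := Fin 3) c⁻¹ * C c ∈ sat I := Ideal.mul_mem_left _ _ hgsat
      rwa [← map_mul, inv_mul_cancel₀ hc0, map_one] at this
    obtain ⟨s, hs⟩ := sat_exists h1sat
    have hmsI : ∀ p ∈ (mm k) ^ s, p ∈ I := by
      intro p hp
      have := (Submodule.mem_colon).mp hs p hp
      rwa [smul_eq_mul, one_mul] at this
    have hbig : (3 : ℕ∞) ≤ htI I := by
      rw [htI]
      refine le_iInf fun P => le_iInf fun hP => ?_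
      refine three_le_height_of_mm_le P ?_
      rw [mm, Ideal.span_le]
      rintro _ ⟨i, rfl⟩
      refine P.isPrime.mem_of_pow_mem s (hP (hmsI _ ?_))
      exact Ideal.pow_mem_pow (Ideal.subset_span (Set.mem_range_self i)) s
    rw [hht] at hbig
    exact absurd hbig (by decide)
  · -- case 1 ≤ e < d
    have hgmm : constantCoeff g = 0 := by
      rw [MvPolynomial.constantCoeff_eq]
      exact hghom.coeff_eq_zero (by rw [map_zero]; omega)
    rcases eq_or_lt_of_le (show e + 1 ≤ d by omega) with hed | hed
    · -- case e = d - 1 : multiples g·Xᵢ span I_d, so I ⊆ (g) has height ≤ 1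
      set w : Fin 3 → Rk k := fun i => g * X i with hw
      have hwI : ∀ i, w i ∈ I := by
        intro i
        have hhom : (w i).IsHomogeneous d := by
          rw [← hed]
          exact hghom.mul (isHomogeneous_X _ _)
        exact (hdeq _ hhom).mpr (Ideal.mul_mem_right _ _ hgsat)
      have hwW : ∀ i, w i ∈ Submodule.span k (Set.range f) := by
        intro i
        refine mem_span_k hIf hfhom (hwI i) ?_
        rw [← hed]; exact hghom.mul (isHomogeneous_X _ _)
      have hwli : LinearIndependent k w := by
        have := (MvPolynomial.linearIndependent_X (Fin 3) k).map'
          (LinearMap.mulLeft k g)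
          (LinearMap.ker_eq_bot.mpr (fun a b hab => by
            simpa using mul_left_cancel₀ hg0 (by simpa using hab)))
        exact this
      have hle : Submodule.span k (Set.range w) ≤ Submodule.span k (Set.range f) :=
        Submodule.span_le.mpr (by rintro _ ⟨i, rfl⟩; exact hwW i)
      have heqW : Submodule.span k (Set.range w) = Submodule.span k (Set.range f) := by
        refine Submodule.eq_of_le_of_finrank_le hle ?_
        rw [hfrW, finrank_span_eq_card hwli]
        simp
      have hgdvd : ∀ j, g ∣ f j := by
        intro j
        have hfj : f j ∈ Submodule.span k (Set.range w) :=
          heqW ▸ Submodule.subset_span ⟨j, rfl⟩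
        obtain ⟨a, ha⟩ := (Submodule.mem_span_range_iff_exists_fun k).mp hfj
        refine ⟨∑ i, a i • X i, ?_⟩
        rw [← ha, Finset.mul_sum]
        exact Finset.sum_congr rfl fun i _ => (mul_smul_comm _ _ _).symm
      have hgu : ¬ IsUnit g := by
        intro hu
        have htop := Ideal.eq_top_of_isUnit_mem _ (mem_mm_of_cc g hgmm) hu
        have h1mm : (1 : Rk k) ∈ mm k := htop ▸ Submodule.mem_top
        have := cc_of_mem_mm 1 h1mm
        simp at this
      obtain ⟨q, hqirr, hqdvd⟩ := WfDvdMonoid.exists_irreducible_factor hgu hg0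
      have hqprime : Prime q := (UniqueFactorizationMonoid.irreducible_iff_prime).mp hqirr
      have hPq : (Ideal.span {q}).IsPrime :=
        (Ideal.span_singleton_prime hqprime.ne_zero).mpr hqprime
      have hIP : I ≤ Ideal.span {q} := by
        rw [hIf, Ideal.span_le]
        rintro _ ⟨j, rfl⟩
        exact Ideal.mem_span_singleton.mpr (hqdvd.trans (hgdvd j))
      have hsmall : htI I ≤ 1 := by
        rw [htI]
        set Pq : PrimeSpectrum (Rk k) := ⟨Ideal.span {q}, hPq⟩ with hPqdef
        refine le_trans (iInf_le _ Pq) (le_trans (iInf_le _ hIP) ?_)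
        exact height_span_irreducible_le_one hqirr hPq
      rw [hht] at hsmall
      exact absurd hsmall (by decide)
    · -- case e + 2 ≤ d : four independent multiples of g in the 3-dim space I_d
      set t := d - e with ht
      have ht2 : 2 ≤ t := by omega
      set ι : Fin 4 → (Fin 3 →₀ ℕ) :=
        ![Finsupp.single 0 t, Finsupp.single 1 t, Finsupp.single 2 t,
          Finsupp.single 0 (t-1) + Finsupp.single 1 1] with hι
      have hιdeg : ∀ j, (ι j).degree = t := by
        intro j
        fin_cases j
        · exact deg_single 0 t
        · exact deg_single 1 t
        · exact deg_single 2 t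
        · show (Finsupp.single (0 : Fin 3) (t-1) + Finsupp.single 1 1).degree = t
          rw [deg_add, deg_single, deg_single]
          omega
      have hιinj : Function.Injective ι := by
        intro a b hab
        fin_cases a <;> fin_cases b <;>
          first
            | rfl
            | (exfalso;
               rw [hι] at hab;
               have h0 := DFunLike.congr_fun hab (0 : Fin 3);
               have h1 := DFunLike.congr_fun hab (1 : Fin 3);
               have h2 := DFunLike.congr_fun hab (2 : Fin 3);
               simp [Finsupp.single_apply, Fin.ext_iff] at h0 h1 h2 <;> omega)
      set μ : Fin 4 → Rk k := fun j => monomial (ι j) 1 with hμ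
      have hμli : LinearIndependent k μ := by
        have := ((basisMonomials (Fin 3) k).linearIndependent).comp ι hιinj
        rw [coe_basisMonomials] at this
        exact this
      set w4 : Fin 4 → Rk k := fun j => g * μ j with hw4
      have hw4li : LinearIndependent k w4 := by
        have := hμli.map' (LinearMap.mulLeft k g)
          (LinearMap.ker_eq_bot.mpr (fun a b hab => by
            simpa using mul_left_cancel₀ hg0 (by simpa using hab)))
        exact this
      have hw4W : ∀ j, w4 j ∈ Submodule.span k (Set.range f) := by
        intro j
        have hμh : (μ j).IsHomogeneous t := isHomogeneous_monomial 1 (hιdeg j)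
        have hhom : (w4 j).IsHomogeneous d := by
          have : e + t = d := by omega
          rw [← this]
          exact hghom.mul hμh
        have hsatm : w4 j ∈ sat I := Ideal.mul_mem_right _ _ hgsat
        exact mem_span_k hIf hfhom ((hdeq _ hhom).mpr hsatm) hhom
      set W := Submodule.span k (Set.range f) with hW
      set w4' : Fin 4 → W := fun j => ⟨w4 j, hw4W j⟩ with hw4'
      have hw4'li : LinearIndependent k w4' := by
        apply LinearIndependent.of_comp W.subtype
        exact hw4li
      have hcard := hw4'li.fintype_card_le_finrank
      rw [hfrW] at hcard
      simp at hcard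

end LowDeg





lemma mul_mem_of_span {J : Ideal (Rk k)} {S : Set (Rk k)} {y : Rk k}
    (h : ∀ g ∈ S, y * g ∈ J) : ∀ p ∈ Ideal.span S, y * p ∈ J := by
  intro p hp
  induction hp using Submodule.span_induction with
  | mem g hg => exact h g hg
  | zero => rw [mul_zero]; exact J.zero_mem
  | add a b _ _ ha hb => rw [mul_add]; exact J.add_mem ha hb
  | smul r a _ ha =>
    have heq : y * (r • a) = r * (y * a) := by rw [smul_eq_mul]; ring
    rw [heq]; exact J.mul_mem_left r ha

section Step

variable {I : Ideal (Rk k)} {d : ℕ} {f : Fin 3 → Rk k}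

theorem step_main (hIf : I = Ideal.span (Set.range f)) (hfhom : ∀ i, (f i).IsHomogeneous d)
    (hlow : ∀ (e : ℕ) (g : Rk k), g.IsHomogeneous e → g ∈ sat I → g ≠ 0 → d ≤ e)
    {x : Rk k} (hx : x ∈ sat I) :
    ∃ N, ∀ p ∈ (mm k) ^ N, x * p ∈ I * (mm k) ^ N := by
  obtain ⟨s, hs⟩ := sat_exists hx
  refine ⟨s, ?_⟩
  have hxe_colon : ∀ e : ℕ, ∀ p ∈ (mm k) ^ s, homogeneousComponent e x * p ∈ I := by
    intro e
    have hgen : ∀ g ∈ {p : Rk k | ∃ σ : Fin 3 →₀ ℕ, σ.degree = s ∧ p = monomial σ 1},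
        homogeneousComponent e x * g ∈ I := by
      rintro _ ⟨σ, hσ, rfl⟩
      have hmono : (monomial σ (1 : k)).IsHomogeneous s := isHomogeneous_monomial 1 hσ
      have hxμI : x * monomial σ 1 ∈ I := by
        have hmem : (monomial σ (1 : k)) ∈ (mm k) ^ s := homog_mem_pow _ hmono
        have := Submodule.mem_colon.mp hs (monomial σ 1) hmem
        rwa [smul_eq_mul] at this
      have hkey : homogeneousComponent e x * monomial σ 1
          = homogeneousComponent (e + s) (x * monomial σ 1) := by
        rw [hcomp_mul _ _ hmono (e + s), if_pos (by omega)]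
        have hsub : e + s - s = e := by omega
        rw [hsub]
      rw [hkey]
      exact comp_mem hIf hfhom hxμI _
    intro p hp
    exact mul_mem_of_span hgen p (by rwa [← pow_mm_eq_span])
  have hxe_sat : ∀ e, homogeneousComponent e x ∈ sat I := fun e =>
    colon_le_sat s (Submodule.mem_colon.mpr fun p hp => by
      rw [smul_eq_mul]; exact hxe_colon e p hp)
  have hcomp_step : ∀ e, ∀ p ∈ (mm k) ^ s, homogeneousComponent e x * p ∈ I * (mm k) ^ s := by
    intro e
    rcases eq_or_ne (homogeneousComponent e x) 0 with h0 | h0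
    · intro p _; rw [h0, zero_mul]; exact Ideal.zero_mem _
    have hde : d ≤ e := hlow e _ (homogeneousComponent_isHomogeneous e x) (hxe_sat e) h0
    have hgen : ∀ g ∈ {p : Rk k | ∃ σ : Fin 3 →₀ ℕ, σ.degree = s ∧ p = monomial σ 1},
        homogeneousComponent e x * g ∈ I * (mm k) ^ s := by
      rintro _ ⟨σ, hσ, rfl⟩
      have hmono : (monomial σ (1 : k)).IsHomogeneous s := isHomogeneous_monomial 1 hσ
      have hyI : homogeneousComponent e x * monomial σ 1 ∈ I :=
        hxe_colon e _ (homog_mem_pow _ hmono)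
      have hyh : (homogeneousComponent e x * monomial σ 1).IsHomogeneous (e + s) :=
        (homogeneousComponent_isHomogeneous e x).mul hmono
      obtain ⟨c, hch, hcs⟩ := homog_decomp hIf hfhom hyI hyh (by omega)
      rw [← hcs]
      refine Ideal.sum_mem _ fun i _ => ?_
      have hci : c i ∈ (mm k) ^ s := by
        have h1 : c i ∈ (mm k) ^ (e + s - d) := homog_mem_pow _ (hch i)
        exact Ideal.pow_le_pow_right (by omega) h1
      have hfi : f i ∈ I := hIf ▸ Ideal.subset_span (Set.mem_range_self i)
      rw [mul_comm (c i) (f i)]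
      exact Ideal.mul_mem_mul hfi hci
    intro p hp
    exact mul_mem_of_span hgen p (by rwa [← pow_mm_eq_span])
  intro p hp
  have hxsum : x * p = ∑ e ∈ Finset.range (x.totalDegree + 1),
      homogeneousComponent e x * p := by
    conv_lhs => rw [← sum_homogeneousComponent x]
    rw [Finset.sum_mul]
  rw [hxsum]
  exact Ideal.sum_mem _ fun e _ => hcomp_step e p hp

theorem integral_of_step {x : Rk k} {N : ℕ}
    (hstep : ∀ p ∈ (mm k) ^ N, x * p ∈ I * (mm k) ^ N) :
    ∃ (m : ℕ) (a : Fin m → Rk k), 0 < m ∧ (∀ i : Fin m, a i ∈ I ^ ((i : ℕ) + 1)) ∧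
      x ^ m + ∑ i : Fin m, a i * x ^ (m - ((i : ℕ) + 1)) = 0 := by
  classical
  haveI : Module.Finite (Rk k) ↥((mm k) ^ N) :=
    Module.Finite.iff_fg.mpr (IsNoetherian.noetherian _)
  have hmaps : ∀ v ∈ (mm k) ^ N, (LinearMap.mulLeft (Rk k) x) v ∈ (mm k) ^ N := by
    intro v hv
    rw [LinearMap.mulLeft_apply]
    exact Ideal.mul_le_right (hstep v hv)
  set φ : ↥((mm k) ^ N) →ₗ[Rk k] ↥((mm k) ^ N) :=
    (LinearMap.mulLeft (Rk k) x).restrict hmaps with hφ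
  have hφcoe : ∀ v : ↥((mm k) ^ N), (φ v : Rk k) = x * v := fun v => rfl
  have hrange : LinearMap.range φ ≤ I • (⊤ : Submodule (Rk k) ↥((mm k) ^ N)) := by
    rintro _ ⟨v, rfl⟩
    rw [Submodule.mem_smul_top_iff, Ideal.smul_eq_mul, hφcoe]
    exact hstep v v.2
  obtain ⟨p, hmonic, -, hcoeff, haeval⟩ :=
    LinearMap.exists_monic_and_coeff_mem_pow_and_aeval_eq_zero_of_range_le_smul
      (Rk k) φ I hrange
  have hφpow : ∀ (n : ℕ) (v : ↥((mm k) ^ N)), ((φ ^ n) v : Rk k) = x ^ n * v := by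
    intro n
    induction n with
    | zero => intro v; simp
    | succ n ih =>
      intro v
      rw [pow_succ', Module.End.mul_apply, hφcoe, ih, pow_succ']
      ring
  set v0 : ↥((mm k) ^ N) := ⟨(X 0 : Rk k) ^ N,
    Ideal.pow_mem_pow (Ideal.subset_span (Set.mem_range_self 0)) N⟩ with hv0
  have happ : ((Polynomial.aeval φ p) v0 : Rk k) = 0 := by rw [haeval]; rfl
  have hcoe : ((Polynomial.aeval φ p) v0 : Rk k) = Polynomial.eval x p * ((X 0 : Rk k) ^ N) := by
    rw [Polynomial.aeval_eq_sum_range, Polynomial.eval_eq_sum_range]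
    rw [LinearMap.coe_sum, Finset.sum_apply]
    rw [AddSubmonoidClass.coe_finset_sum]
    rw [Finset.sum_mul]
    refine Finset.sum_congr rfl fun i _ => ?_
    rw [LinearMap.smul_apply, SetLike.val_smul, hφpow, smul_eq_mul, mul_assoc]
  have heval : Polynomial.eval x p = 0 := by
    have := hcoe.symm.trans happ
    rcases mul_eq_zero.mp this with h | h
    · exact h
    · exact absurd h (pow_ne_zero _ (X_ne_zero 0))
  set n := p.natDegree with hn
  have hnpos : 0 < n := by
    rcases Nat.eq_zero_or_pos n with h0 | h
    · exfalso
      have hp1 : p = 1 := (Polynomial.Monic.natDegree_eq_zero hmonic).mp h0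
      rw [hp1] at heval
      simp at heval
    · exact h
  refine ⟨n, fun i => p.coeff (n - ((i : ℕ) + 1)), hnpos, ?_, ?_⟩
  · intro i
    have h1 : (i : ℕ) + 1 ≤ n := i.2
    have := hcoeff (n - ((i : ℕ) + 1))
    rwa [Nat.sub_sub_self h1] at this
  · rw [Polynomial.eval_eq_sum_range] at heval
    rw [Finset.sum_range_succ] at heval
    rw [← hn, Polynomial.Monic.coeff_natDegree hmonic, one_mul] at heval
    have hrefl : ∑ j ∈ Finset.range n, p.coeff j * x ^ j
        = ∑ i : Fin n, p.coeff (n - ((i : ℕ) + 1)) * x ^ (n - ((i : ℕ) + 1)) := by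
      rw [← Finset.sum_range_reflect]
      rw [Fin.sum_univ_eq_sum_range (fun j => p.coeff (n - (j + 1)) * x ^ (n - (j + 1))) n]
      refine Finset.sum_congr rfl fun j hj => ?_
      have : n - 1 - j = n - (j + 1) := by omega
      rw [this]
    rw [hrefl] at heval
    rw [add_comm] at heval
    exact heval

end Step


end Stmt15

/-- Let `R = k[x,y,z]` and let `I ⊆ R` be a homogeneous ideal
of codimension `2` generated by `3` linearly independent forms of degree
`d ≥ 1` such that `I_d = (I^sat)_d`.  If `I^sat` is integrally closed, then
`I^sat` equals the integral closure of `I`.  (In particular, for a plane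
rational map without fixed part whose base ideal `I` satisfies
`I_d = (I^sat)_d`, if the fat ideal associated to the proper base points equals
`I^sat`, then that fat ideal is the integral closure of `I`.) -/
theorem stmt15 (k : Type) [Field k] (I : Ideal (Rk k)) (d : ℕ) (hd : 1 ≤ d)
    (hht : htI I = 2)
    (f : Fin 3 → Rk k) (hfhom : ∀ i, (f i).IsHomogeneous d)
    (hfli : LinearIndependent k f) (hIf : I = Ideal.span (Set.range f))
    -- `I_d = (I^sat)_d`
    (hdeq : ∀ h : Rk k, h.IsHomogeneous d → (h ∈ I ↔ h ∈ sat I))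
    -- `I^sat` is integrally closed
    (hic : ∀ x : Rk k, IdealIntegral (sat I) x → x ∈ sat I) :
    ∀ x : Rk k, x ∈ sat I ↔ IdealIntegral I x := by
  classical
  have hlow := Stmt15.low_deg hd hht hfhom hfli hIf hdeq
  have hIsat : I ≤ sat I := Stmt15.I_le_sat
  intro x
  constructor
  · intro hx
    obtain ⟨N, hstep⟩ := Stmt15.step_main hIf hfhom hlow hx
    obtain ⟨m, a, hm, ha, heq⟩ := Stmt15.integral_of_step hstep
    exact ⟨m, a, hm, ha, heq⟩
  · intro h
    have h' : ∃ (m : ℕ) (a : Fin m → Rk k), 0 < m ∧ (∀ i : Fin m, a i ∈ I ^ ((i : ℕ) + 1)) ∧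
        x ^ m + ∑ i : Fin m, a i * x ^ (m - ((i : ℕ) + 1)) = 0 := h
    obtain ⟨m, a, hm, ha, heq⟩ := h'
    refine hic x ⟨m, a, hm, fun i => Ideal.pow_right_mono hIsat _ (ha i), heq⟩
end

section
/- Let R = k[x,y,z] be the polynomial ring over a field k. Then: (1) the ideals (x³, x²y, y²z) and (x³, xyz, yz²) are integrally closed; (2) for every d ≥ 4, neither I = (x^d, x^{d−1}y, y^{d−1}z) nor J = (x^d, xyz^{d−2}, yz^{d−1}) is integrally closed. Indeed, for even d ≥ 4, x^{d/2}y^{d/2}z ∉ I but (x^{d/2}y^{d/2}z)² ∈ I², and x^{d−1}y²z^{(d−2)/2} ∉ J but (x^{d−1}y²z^{(d−2)/2})² ∈ J²; for odd d ≥ 5, x^{(d−1)/2}y^{(d+1)/2}z ∉ I but its square lies in I², and x^{d−1}y²z^{(d−1)/2} ∉ J but its square lies in J². -/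
open MvPolynomial

/-- The ideal `(x^d, x^{d−1}y, y^{d−1}z)` of `R = k[x,y,z]`. -/
noncomputable def idlI (k : Type) [Field k] (d : ℕ) : Ideal (Rk k) :=
  Ideal.span {X 0 ^ d, X 0 ^ (d - 1) * X 1, X 1 ^ (d - 1) * X 2}

/-- The ideal `(x^d, xyz^{d−2}, yz^{d−1})` of `R = k[x,y,z]`. -/
noncomputable def idlJ (k : Type) [Field k] (d : ℕ) : Ideal (Rk k) :=
  Ideal.span {X 0 ^ d, X 0 * X 1 * X 2 ^ (d - 2), X 1 * X 2 ^ (d - 1)}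

/-- The ideal `(x³, x²y, y²z)` of `R = k[x,y,z]`. -/
noncomputable def idlA (k : Type) [Field k] : Ideal (Rk k) :=
  Ideal.span {X 0 ^ 3, X 0 ^ 2 * X 1, X 1 ^ 2 * X 2}

/-- The ideal `(x³, xyz, yz²)` of `R = k[x,y,z]`. -/
noncomputable def idlB (k : Type) [Field k] : Ideal (Rk k) :=
  Ideal.span {X 0 ^ 3, X 0 * X 1 * X 2, X 1 * X 2 ^ 2}


namespace S16

variable {k : Type} [Field k]

/-- exponent vector (a,b,c) -/
noncomputable def ee (a b c : ℕ) : Fin 3 →₀ ℕ :=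
  Finsupp.single 0 a + Finsupp.single 1 b + Finsupp.single 2 c

lemma ee_apply0 (a b c : ℕ) : ee a b c 0 = a := by
  simp [ee, Finsupp.single_apply]

lemma ee_apply1 (a b c : ℕ) : ee a b c 1 = b := by
  simp [ee, Finsupp.single_apply]

lemma ee_apply2 (a b c : ℕ) : ee a b c 2 = c := by
  simp [ee, Finsupp.single_apply]

lemma ee_eta (s : Fin 3 →₀ ℕ) : ee (s 0) (s 1) (s 2) = s := by
  ext i
  fin_cases i <;> simp [ee, Finsupp.single_apply]

lemma ee_add (a b c a' b' c' : ℕ) : ee a b c + ee a' b' c' = ee (a+a') (b+b') (c+c') := by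
  ext i
  fin_cases i <;> simp [ee, Finsupp.single_apply]

lemma ee_congr {a b c a' b' c' : ℕ} (h1 : a = a') (h2 : b = b') (h3 : c = c') :
    ee a b c = ee a' b' c' := by subst h1; subst h2; subst h3; rfl

lemma ee_le {a b c a' b' c' : ℕ} (h : ee a b c ≤ ee a' b' c') :
    a ≤ a' ∧ b ≤ b' ∧ c ≤ c' := by
  rw [Finsupp.le_def] at h
  exact ⟨by simpa [ee_apply0] using h 0, by simpa [ee_apply1] using h 1,
    by simpa [ee_apply2] using h 2⟩

lemma le_ee {a b c a' b' c' : ℕ} (h1 : a ≤ a') (h2 : b ≤ b') (h3 : c ≤ c') :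
    ee a b c ≤ ee a' b' c' := by
  rw [Finsupp.le_def]
  intro i
  fin_cases i <;> simpa [ee_apply0, ee_apply1, ee_apply2]

lemma X_pow_mul (a b c : ℕ) :
    (X 0 : Rk k) ^ a * X 1 ^ b * X 2 ^ c = monomial (ee a b c) 1 := by
  simp [ee, X_pow_eq_monomial, monomial_mul]

/-- weighted degree -/
def wdeg (w : Fin 3 → ℕ) (s : Fin 3 →₀ ℕ) : ℕ := w 0 * s 0 + w 1 * s 1 + w 2 * s 2

lemma wdeg_ee (w : Fin 3 → ℕ) (a b c : ℕ) :
    wdeg w (ee a b c) = w 0 * a + w 1 * b + w 2 * c := by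
  simp [wdeg, ee_apply0, ee_apply1, ee_apply2]

/-- the weight homomorphism into `R[t]`, `X i ↦ X i * t^(w i)` -/
noncomputable def Phi (w : Fin 3 → ℕ) : Rk k →ₐ[k] Polynomial (Rk k) :=
  aeval fun i => Polynomial.C (X i) * Polynomial.X ^ (w i)

lemma Phi_monomial (w : Fin 3 → ℕ) (s : Fin 3 →₀ ℕ) (a : k) :
    Phi w (monomial s a) = Polynomial.C (monomial s a) * Polynomial.X ^ (wdeg w s) := by
  have h : monomial s a = C a * X 0 ^ (s 0) * X 1 ^ (s 1) * X 2 ^ (s 2) := by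
    rw [mul_assoc, mul_assoc, ← mul_assoc (X 0 ^ s 0), X_pow_mul, C_mul_monomial, mul_one,
      ee_eta]
  rw [h]
  simp only [map_mul, map_pow, Phi, aeval_X, aeval_C, Polynomial.algebraMap_apply,
    MvPolynomial.algebraMap_eq]
  simp only [map_mul, map_pow, mul_pow, ← pow_mul]
  rw [wdeg]
  ring

lemma coeff_Phi (w : Fin 3 → ℕ) (f : Rk k) (n : ℕ) (s : Fin 3 →₀ ℕ) :
    ((Phi w f).coeff n).coeff s = if wdeg w s = n then f.coeff s else 0 := by
  induction f using MvPolynomial.induction_on' with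
  | monomial t a =>
    rw [Phi_monomial, Polynomial.coeff_C_mul, Polynomial.coeff_X_pow]
    rcases eq_or_ne t s with rfl | hts
    · by_cases h : wdeg w t = n
      · simp [if_pos h.symm, if_pos h]
      · simp [if_neg (Ne.symm h), if_neg h]
    · by_cases h : wdeg w s = n <;>
        simp [h, coeff_monomial, hts] <;> split <;> simp [coeff_monomial, hts]
  | add p q hp hq =>
    simp only [map_add, Polynomial.coeff_add, MvPolynomial.coeff_add, hp, hq]
    split <;> simp

lemma coeff_Phi' (w : Fin 3 → ℕ) (f : Rk k) (s : Fin 3 →₀ ℕ) :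
    ((Phi w f).coeff (wdeg w s)).coeff s = f.coeff s := by
  simp [coeff_Phi]

lemma le_tD {p : Polynomial (Rk k)} {c : ℕ∞} (h : ∀ n : ℕ, p.coeff n ≠ 0 → c ≤ (n : ℕ∞)) :
    c ≤ p.trailingDegree := by
  unfold Polynomial.trailingDegree
  exact Finset.le_min fun n hn => h n (Polynomial.mem_support_iff.mp hn)

/-- ideal of elements of weighted order at least `c` -/
noncomputable def V (w : Fin 3 → ℕ) (c : ℕ) : Ideal (Rk k) where
  carrier := {f | (c : ℕ∞) ≤ (Phi w f).trailingDegree}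
  zero_mem' := by simp [Set.mem_setOf_eq]
  add_mem' := by
    intro p q hp hq
    simp only [Set.mem_setOf_eq, map_add] at *
    refine le_tD fun n hn => ?_
    rw [Polynomial.coeff_add] at hn
    by_cases h : (Phi w p).coeff n = 0
    · rw [h, zero_add] at hn
      exact le_trans hq (Polynomial.trailingDegree_le_of_ne_zero hn)
    · exact le_trans hp (Polynomial.trailingDegree_le_of_ne_zero h)
  smul_mem' := by
    intro r f hf
    simp only [Set.mem_setOf_eq, smul_eq_mul, map_mul] at *
    calc (c : ℕ∞) ≤ (Phi w f).trailingDegree := hf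
      _ ≤ (Phi w r).trailingDegree + (Phi w f).trailingDegree := le_add_self
      _ ≤ _ := Polynomial.le_trailingDegree_mul

lemma mem_V {w : Fin 3 → ℕ} {c : ℕ} {f : Rk k} :
    f ∈ V w c ↔ (c : ℕ∞) ≤ (Phi w f).trailingDegree := Iff.rfl

lemma V_mono {w : Fin 3 → ℕ} {c c' : ℕ} (h : c' ≤ c) : (V w c : Ideal (Rk k)) ≤ V w c' := by
  intro f hf
  rw [mem_V] at *
  exact le_trans (by exact_mod_cast h) hf

lemma mul_mem_V {w : Fin 3 → ℕ} {c c' : ℕ} {f g : Rk k} (hf : f ∈ V w c) (hg : g ∈ V w c') :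
    f * g ∈ V w (c + c') := by
  rw [mem_V, map_mul, Nat.cast_add]
  exact le_trans (add_le_add hf hg) Polynomial.le_trailingDegree_mul

lemma pow_mem_V {w : Fin 3 → ℕ} {c : ℕ} {f : Rk k} (hf : f ∈ V w c) (j : ℕ) :
    f ^ j ∈ V w (j * c) := by
  induction j with
  | zero => simp [mem_V, pow_zero]
  | succ j ih =>
    have := mul_mem_V ih hf
    rw [← pow_succ] at this
    convert this using 2
    ring

lemma ideal_pow_le_V {w : Fin 3 → ℕ} {c : ℕ} {I : Ideal (Rk k)} (hI : I ≤ V w c) (i : ℕ) :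
    I ^ i ≤ V w (i * c) := by
  induction i with
  | zero =>
    intro f _
    rw [mem_V]
    simp
  | succ i ih =>
    rw [pow_succ]
    refine Submodule.mul_le.mpr fun f hf g hg => ?_
    have := mul_mem_V (ih hf) (hI hg)
    convert this using 2
    ring

lemma tD_pow (p : Polynomial (Rk k)) (hp : p ≠ 0) (m : ℕ) :
    (p ^ m).trailingDegree = ((m * p.natTrailingDegree : ℕ) : ℕ∞) := by
  induction m with
  | zero => simp [pow_zero, Polynomial.trailingDegree_one]
  | succ m ih =>
    rw [pow_succ, Polynomial.trailingDegree_mul, ih,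
      Polynomial.trailingDegree_eq_natTrailingDegree hp]
    rw [← Nat.cast_add]
    congr 1
    ring

lemma wdeg_ge_of_integral {I : Ideal (Rk k)} {w : Fin 3 → ℕ} {c : ℕ} (hI : I ≤ V w c)
    {u : Rk k} (hu : ∃ (m : ℕ) (a : Fin m → Rk k), 0 < m ∧ (∀ i : Fin m, a i ∈ I ^ ((i : ℕ) + 1)) ∧
      u ^ m + ∑ i : Fin m, a i * u ^ (m - ((i : ℕ) + 1)) = 0)
    {s : Fin 3 →₀ ℕ} (hs : u.coeff s ≠ 0) : c ≤ wdeg w s := by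
  have hu0 : u ≠ 0 := fun h => hs (by simp [h])
  have hΦ : Phi w u ≠ 0 := by
    intro h0
    apply hs
    rw [← coeff_Phi' w u s, h0]
    simp
  set n0 := (Phi w u).natTrailingDegree with hn0def
  -- main claim : c ≤ n0
  have hcn0 : c ≤ n0 := by
    by_contra hc
    push_neg at hc
    obtain ⟨m, a, hm, ha, heq⟩ := hu
    have hun0 : u ∈ V w n0 := by
      rw [mem_V]
      exact Polynomial.natTrailingDegree_le_trailingDegree
    have hsum : ∑ i : Fin m, a i * u ^ (m - ((i : ℕ) + 1)) ∈ V w (m * n0 + 1) := by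
      refine Submodule.sum_mem _ fun i _ => ?_
      have h1 : a i ∈ V w (((i : ℕ) + 1) * c) := ideal_pow_le_V hI _ (ha i)
      have h2 : u ^ (m - ((i : ℕ) + 1)) ∈ V w ((m - ((i : ℕ) + 1)) * n0) :=
        pow_mem_V hun0 _
      refine V_mono ?_ (mul_mem_V h1 h2)
      have hilt : (i : ℕ) < m := i.isLt
      have e0 : ((i : ℕ) + 1) + (m - ((i : ℕ) + 1)) = m := by omega
      have e1 : ((i : ℕ) + 1) * (n0 + 1) ≤ ((i : ℕ) + 1) * c := Nat.mul_le_mul le_rfl hc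
      have e2 : ((i : ℕ) + 1) * n0 + (m - ((i : ℕ) + 1)) * n0 = m * n0 := by
        rw [← add_mul, e0]
      nlinarith [e1, e2]
    have hpm : u ^ m ∈ V w (m * n0 + 1) := by
      have : u ^ m = -(∑ i : Fin m, a i * u ^ (m - ((i : ℕ) + 1))) :=
        eq_neg_of_add_eq_zero_left heq
      rw [this]
      exact neg_mem hsum
    rw [mem_V, map_pow, tD_pow _ hΦ, Nat.cast_le] at hpm
    have hpm' : m * n0 + 1 ≤ m * n0 := hpm
    omega
  -- now transfer to s
  have hco : (Phi w u).coeff (wdeg w s) ≠ 0 := by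
    intro h0
    apply hs
    rw [← coeff_Phi' w u s, h0]
    simp
  have h2 : n0 ≤ wdeg w s := Polynomial.natTrailingDegree_le_of_ne_zero hco
  omega

end S16

namespace S16

variable {k : Type} [Field k]

lemma vec3_two (a b c : ℕ) : (![a,b,c] : Fin 3 → ℕ) 2 = c := rfl

lemma ee_le' {a b c : ℕ} {s : Fin 3 →₀ ℕ} (h1 : a ≤ s 0) (h2 : b ≤ s 1) (h3 : c ≤ s 2) :
    ee a b c ≤ s :=
  le_of_le_of_eq (le_ee h1 h2 h3) (ee_eta s)

lemma mono_sq (s : Fin 3 →₀ ℕ) : (monomial s (1:k))^2 = monomial (s+s) 1 := by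
  rw [sq, monomial_mul, one_mul]

lemma monomial_mem_V {w : Fin 3 → ℕ} {c : ℕ} {s : Fin 3 →₀ ℕ} (h : c ≤ wdeg w s) :
    (monomial s (1:k)) ∈ V w c := by
  rw [mem_V, Phi_monomial]
  refine le_trans ?_ (Polynomial.le_trailingDegree_C_mul_X_pow _ _)
  exact_mod_cast h

lemma span_ee_le_V {w : Fin 3 → ℕ} {c : ℕ} {T : Set (Fin 3 →₀ ℕ)}
    (h : ∀ s ∈ T, c ≤ wdeg w s) :
    Ideal.span ((fun s => monomial s (1:k)) '' T) ≤ V w c := by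
  rw [Ideal.span_le]
  rintro f ⟨s, hs, rfl⟩
  exact monomial_mem_V (h s hs)

lemma not_mem_span3 {E1 E2 E3 s : Fin 3 →₀ ℕ} (h1 : ¬ E1 ≤ s) (h2 : ¬ E2 ≤ s)
    (h3 : ¬ E3 ≤ s) :
    (monomial s (1:k)) ∉ Ideal.span ((fun t => monomial t (1:k)) '' {E1, E2, E3}) := by
  rw [mem_ideal_span_monomial_image]
  intro h
  obtain ⟨t, ht, hts⟩ := h s (by simp [support_monomial])
  simp only [Set.mem_insert_iff, Set.mem_singleton_iff] at ht
  rcases ht with rfl | rfl | rfl <;> tauto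

lemma idlA_eq : idlA k = Ideal.span ((fun s => monomial s (1:k)) '' {ee 3 0 0, ee 2 1 0, ee 0 2 1}) := by
  rw [idlA,
    show (X 0:Rk k)^3 = monomial (ee 3 0 0) 1 from by simpa using X_pow_mul (k:=k) 3 0 0,
    show (X 0:Rk k)^2 * X 1 = monomial (ee 2 1 0) 1 from by simpa using X_pow_mul (k:=k) 2 1 0,
    show (X 1:Rk k)^2 * X 2 = monomial (ee 0 2 1) 1 from by simpa using X_pow_mul (k:=k) 0 2 1,
    Set.image_insert_eq, Set.image_insert_eq, Set.image_singleton]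

lemma idlB_eq : idlB k = Ideal.span ((fun s => monomial s (1:k)) '' {ee 3 0 0, ee 1 1 1, ee 0 1 2}) := by
  rw [idlB,
    show (X 0:Rk k)^3 = monomial (ee 3 0 0) 1 from by simpa using X_pow_mul (k:=k) 3 0 0,
    show (X 0:Rk k) * X 1 * X 2 = monomial (ee 1 1 1) 1 from by simpa using X_pow_mul (k:=k) 1 1 1,
    show (X 1:Rk k) * X 2^2 = monomial (ee 0 1 2) 1 from by simpa using X_pow_mul (k:=k) 0 1 2,
    Set.image_insert_eq, Set.image_insert_eq, Set.image_singleton]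

lemma idlI_eq (d : ℕ) :
    idlI k d = Ideal.span ((fun s => monomial s (1:k)) '' {ee d 0 0, ee (d-1) 1 0, ee 0 (d-1) 1}) := by
  rw [idlI,
    show (X 0:Rk k)^d = monomial (ee d 0 0) 1 from by simpa using X_pow_mul (k:=k) d 0 0,
    show (X 0:Rk k)^(d-1) * X 1 = monomial (ee (d-1) 1 0) 1 from by
      simpa using X_pow_mul (k:=k) (d-1) 1 0,
    show (X 1:Rk k)^(d-1) * X 2 = monomial (ee 0 (d-1) 1) 1 from by
      simpa using X_pow_mul (k:=k) 0 (d-1) 1,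
    Set.image_insert_eq, Set.image_insert_eq, Set.image_singleton]

lemma idlJ_eq (d : ℕ) :
    idlJ k d = Ideal.span ((fun s => monomial s (1:k)) '' {ee d 0 0, ee 1 1 (d-2), ee 0 1 (d-1)}) := by
  rw [idlJ,
    show (X 0:Rk k)^d = monomial (ee d 0 0) 1 from by simpa using X_pow_mul (k:=k) d 0 0,
    show (X 0:Rk k) * X 1 * X 2^(d-2) = monomial (ee 1 1 (d-2)) 1 from by
      simpa using X_pow_mul (k:=k) 1 1 (d-2),
    show (X 1:Rk k) * X 2^(d-1) = monomial (ee 0 1 (d-1)) 1 from by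
      simpa using X_pow_mul (k:=k) 0 1 (d-1),
    Set.image_insert_eq, Set.image_insert_eq, Set.image_singleton]

lemma closedA (u : Rk k) (hu : IdealIntegral (idlA k) u) : u ∈ idlA k := by
  have hV1 : idlA k ≤ V ![4,5,0] 10 := by
    rw [idlA_eq]
    refine span_ee_le_V fun s hs => ?_
    simp only [Set.mem_insert_iff, Set.mem_singleton_iff] at hs
    rcases hs with rfl | rfl | rfl <;> simp [wdeg_ee]
  have hV2 : idlA k ≤ V ![3,0,5] 5 := by
    rw [idlA_eq]
    refine span_ee_le_V fun s hs => ?_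
    simp only [Set.mem_insert_iff, Set.mem_singleton_iff] at hs
    rcases hs with rfl | rfl | rfl <;> simp [wdeg_ee]
  rw [idlA_eq, mem_ideal_span_monomial_image]
  intro s hs
  have hs' := MvPolynomial.mem_support_iff.mp hs
  have H1 : 10 ≤ wdeg ![4,5,0] s := wdeg_ge_of_integral hV1 hu hs'
  have H2 : 5 ≤ wdeg ![3,0,5] s := wdeg_ge_of_integral hV2 hu hs'
  rw [wdeg] at H1 H2
  simp only [Matrix.cons_val_zero, Matrix.cons_val_one, Matrix.head_cons, vec3_two] at H1 H2
  have key : 3 ≤ s 0 ∨ (2 ≤ s 0 ∧ 1 ≤ s 1) ∨ (2 ≤ s 1 ∧ 1 ≤ s 2) := by omega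
  rcases key with h | h | h
  · exact ⟨ee 3 0 0, by simp, ee_le' h (by omega) (by omega)⟩
  · exact ⟨ee 2 1 0, by simp, ee_le' h.1 h.2 (by omega)⟩
  · exact ⟨ee 0 2 1, by simp, ee_le' (by omega) h.1 h.2⟩

lemma closedB (u : Rk k) (hu : IdealIntegral (idlB k) u) : u ∈ idlB k := by
  have hV1 : idlB k ≤ V ![2,5,0] 5 := by
    rw [idlB_eq]
    refine span_ee_le_V fun s hs => ?_
    simp only [Set.mem_insert_iff, Set.mem_singleton_iff] at hs
    rcases hs with rfl | rfl | rfl <;> simp [wdeg_ee]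
  have hV2 : idlB k ≤ V ![4,0,6] 10 := by
    rw [idlB_eq]
    refine span_ee_le_V fun s hs => ?_
    simp only [Set.mem_insert_iff, Set.mem_singleton_iff] at hs
    rcases hs with rfl | rfl | rfl <;> simp [wdeg_ee]
  rw [idlB_eq, mem_ideal_span_monomial_image]
  intro s hs
  have hs' := MvPolynomial.mem_support_iff.mp hs
  have H1 : 5 ≤ wdeg ![2,5,0] s := wdeg_ge_of_integral hV1 hu hs'
  have H2 : 10 ≤ wdeg ![4,0,6] s := wdeg_ge_of_integral hV2 hu hs'
  rw [wdeg] at H1 H2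
  simp only [Matrix.cons_val_zero, Matrix.cons_val_one, Matrix.head_cons, vec3_two] at H1 H2
  have key : 3 ≤ s 0 ∨ (1 ≤ s 0 ∧ 1 ≤ s 1 ∧ 1 ≤ s 2) ∨ (1 ≤ s 1 ∧ 2 ≤ s 2) := by omega
  rcases key with h | h | h
  · exact ⟨ee 3 0 0, by simp, ee_le' h (by omega) (by omega)⟩
  · exact ⟨ee 1 1 1, by simp, ee_le' h.1 h.2.1 h.2.2⟩
  · exact ⟨ee 0 1 2, by simp, ee_le' (by omega) h.1 h.2⟩

end S16

namespace S16

variable {k : Type} [Field k]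

lemma not_closed_of {A : Type} [CommRing A] {I : Ideal A} {u : A}
    (h1 : u ∉ I) (h2 : u ^ 2 ∈ I ^ 2) :
    ¬ ∀ v : A, IdealIntegral I v → v ∈ I := by
  intro h
  apply h1
  apply h u
  refine ⟨2, ![0, -(u ^ 2)], two_pos, ?_, ?_⟩
  · intro i
    fin_cases i
    · simp
    · simpa using neg_mem h2
  · simp [Fin.sum_univ_two]

lemma not_mem_I {d a b c : ℕ} (h1 : ¬ d ≤ a) (h2 : ¬(d - 1 ≤ a ∧ 1 ≤ b))
    (h3 : ¬(d - 1 ≤ b ∧ 1 ≤ c)) :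
    (X 0 ^ a * X 1 ^ b * X 2 ^ c : Rk k) ∉ idlI k d := by
  rw [X_pow_mul, idlI_eq]
  refine not_mem_span3 ?_ ?_ ?_
  · intro hle; exact h1 (ee_le hle).1
  · intro hle; obtain ⟨x, y, _⟩ := ee_le hle; exact h2 ⟨x, y⟩
  · intro hle; obtain ⟨_, y, z⟩ := ee_le hle; exact h3 ⟨y, z⟩

lemma not_mem_J {d a b c : ℕ} (h1 : ¬ d ≤ a) (h2 : ¬(1 ≤ a ∧ 1 ≤ b ∧ d - 2 ≤ c))
    (h3 : ¬(1 ≤ b ∧ d - 1 ≤ c)) :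
    (X 0 ^ a * X 1 ^ b * X 2 ^ c : Rk k) ∉ idlJ k d := by
  rw [X_pow_mul, idlJ_eq]
  refine not_mem_span3 ?_ ?_ ?_
  · intro hle; exact h1 (ee_le hle).1
  · intro hle; obtain ⟨x, y, z⟩ := ee_le hle; exact h2 ⟨x, y, z⟩
  · intro hle; obtain ⟨_, y, z⟩ := ee_le hle; exact h3 ⟨y, z⟩

lemma sq_mem_I {d a b c p q r : ℕ} (h1 : a + a = p + (d - 1)) (h2 : b + b = q + 1 + (d - 1))
    (h3 : c + c = r + 1) :
    (X 0 ^ a * X 1 ^ b * X 2 ^ c : Rk k) ^ 2 ∈ (idlI k d) ^ 2 := by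
  have hg2 : (monomial (ee (d-1) 1 0) (1:k)) ∈ idlI k d := by
    rw [idlI_eq]; exact Ideal.subset_span ⟨_, by simp, rfl⟩
  have hg3 : (monomial (ee 0 (d-1) 1) (1:k)) ∈ idlI k d := by
    rw [idlI_eq]; exact Ideal.subset_span ⟨_, by simp, rfl⟩
  have key : (X 0 ^ a * X 1 ^ b * X 2 ^ c : Rk k) ^ 2 =
      monomial (ee p q r) 1 * (monomial (ee (d-1) 1 0) 1 * monomial (ee 0 (d-1) 1) 1) := by
    rw [X_pow_mul, mono_sq, ee_add]
    simp only [monomial_mul, one_mul, mul_one, ee_add]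
    exact congrArg (fun t => monomial t (1:k)) (ee_congr (by omega) (by omega) (by omega))
  rw [key, pow_two]
  exact Ideal.mul_mem_left _ _ (Ideal.mul_mem_mul hg2 hg3)

lemma sq_mem_J {d a b c p q r : ℕ} (h1 : a + a = p + d + 1) (h2 : b + b = q + 1)
    (h3 : c + c = r + (d - 2)) :
    (X 0 ^ a * X 1 ^ b * X 2 ^ c : Rk k) ^ 2 ∈ (idlJ k d) ^ 2 := by
  have hg1 : (monomial (ee d 0 0) (1:k)) ∈ idlJ k d := by
    rw [idlJ_eq]; exact Ideal.subset_span ⟨_, by simp, rfl⟩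
  have hg2 : (monomial (ee 1 1 (d-2)) (1:k)) ∈ idlJ k d := by
    rw [idlJ_eq]; exact Ideal.subset_span ⟨_, by simp, rfl⟩
  have key : (X 0 ^ a * X 1 ^ b * X 2 ^ c : Rk k) ^ 2 =
      monomial (ee p q r) 1 * (monomial (ee d 0 0) 1 * monomial (ee 1 1 (d-2)) 1) := by
    rw [X_pow_mul, mono_sq, ee_add]
    simp only [monomial_mul, one_mul, mul_one, ee_add]
    exact congrArg (fun t => monomial t (1:k)) (ee_congr (by omega) (by omega) (by omega))
  rw [key, pow_two]
  exact Ideal.mul_mem_left _ _ (Ideal.mul_mem_mul hg1 hg2)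

end S16

/-- In `R = k[x,y,z]`:
(1) the ideals `(x³, x²y, y²z)` and `(x³, xyz, yz²)` are integrally closed;
(2) for every `d ≥ 4`, neither `I = (x^d, x^{d−1}y, y^{d−1}z)` nor
`J = (x^d, xyz^{d−2}, yz^{d−1})` is integrally closed, with the indicated
witnesses: for even `d ≥ 4`, `x^{d/2}y^{d/2}z ∉ I` but its square lies in `I²`,
and `x^{d−1}y²z^{(d−2)/2} ∉ J` but its square lies in `J²`; for odd `d ≥ 5`,
`x^{(d−1)/2}y^{(d+1)/2}z ∉ I` but its square lies in `I²`, and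
`x^{d−1}y²z^{(d−1)/2} ∉ J` but its square lies in `J²`. -/
theorem stmt16 (k : Type) [Field k] :
    -- (1)
    (∀ u : Rk k, IdealIntegral (idlA k) u → u ∈ idlA k) ∧
    (∀ u : Rk k, IdealIntegral (idlB k) u → u ∈ idlB k) ∧
    -- (2)
    (∀ d : ℕ, 4 ≤ d →
      (¬ ∀ u : Rk k, IdealIntegral (idlI k d) u → u ∈ idlI k d) ∧
      (¬ ∀ u : Rk k, IdealIntegral (idlJ k d) u → u ∈ idlJ k d) ∧
      (Even d →
        X 0 ^ (d / 2) * X 1 ^ (d / 2) * X 2 ∉ idlI k d ∧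
        (X 0 ^ (d / 2) * X 1 ^ (d / 2) * X 2) ^ 2 ∈ (idlI k d) ^ 2 ∧
        X 0 ^ (d - 1) * X 1 ^ 2 * X 2 ^ ((d - 2) / 2) ∉ idlJ k d ∧
        (X 0 ^ (d - 1) * X 1 ^ 2 * X 2 ^ ((d - 2) / 2)) ^ 2 ∈ (idlJ k d) ^ 2) ∧
      (Odd d →
        X 0 ^ ((d - 1) / 2) * X 1 ^ ((d + 1) / 2) * X 2 ∉ idlI k d ∧
        (X 0 ^ ((d - 1) / 2) * X 1 ^ ((d + 1) / 2) * X 2) ^ 2 ∈ (idlI k d) ^ 2 ∧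
        X 0 ^ (d - 1) * X 1 ^ 2 * X 2 ^ ((d - 1) / 2) ∉ idlJ k d ∧
        (X 0 ^ (d - 1) * X 1 ^ 2 * X 2 ^ ((d - 1) / 2)) ^ 2 ∈ (idlJ k d) ^ 2)) := by
  refine ⟨S16.closedA, S16.closedB, fun d hd => ?_⟩
  have hX2 : (X 2 : Rk k) = X 2 ^ 1 := (pow_one _).symm
  have HIe : Even d →
      (X 0 ^ (d / 2) * X 1 ^ (d / 2) * X 2 : Rk k) ∉ idlI k d ∧
      (X 0 ^ (d / 2) * X 1 ^ (d / 2) * X 2 : Rk k) ^ 2 ∈ (idlI k d) ^ 2 := by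
    rintro ⟨e, rfl⟩
    have h2 : (e + e) / 2 = e := by omega
    rw [hX2, h2]
    exact ⟨S16.not_mem_I (by omega) (by omega) (by omega),
      S16.sq_mem_I (p := 1) (q := 0) (r := 1) (by omega) (by omega) (by omega)⟩
  have HJe : Even d →
      (X 0 ^ (d - 1) * X 1 ^ 2 * X 2 ^ ((d - 2) / 2) : Rk k) ∉ idlJ k d ∧
      (X 0 ^ (d - 1) * X 1 ^ 2 * X 2 ^ ((d - 2) / 2) : Rk k) ^ 2 ∈ (idlJ k d) ^ 2 := by
    rintro ⟨e, rfl⟩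
    have h2 : (e + e - 2) / 2 = e - 1 := by omega
    rw [h2]
    exact ⟨S16.not_mem_J (by omega) (by omega) (by omega),
      S16.sq_mem_J (p := e + e - 3) (q := 3) (r := 0) (by omega) (by omega) (by omega)⟩
  have HIo : Odd d →
      (X 0 ^ ((d - 1) / 2) * X 1 ^ ((d + 1) / 2) * X 2 : Rk k) ∉ idlI k d ∧
      (X 0 ^ ((d - 1) / 2) * X 1 ^ ((d + 1) / 2) * X 2 : Rk k) ^ 2 ∈ (idlI k d) ^ 2 := by
    rintro ⟨e, rfl⟩
    have h2 : (2 * e + 1 - 1) / 2 = e := by omega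
    have h3 : (2 * e + 1 + 1) / 2 = e + 1 := by omega
    rw [hX2, h2, h3]
    exact ⟨S16.not_mem_I (by omega) (by omega) (by omega),
      S16.sq_mem_I (p := 0) (q := 1) (r := 1) (by omega) (by omega) (by omega)⟩
  have HJo : Odd d →
      (X 0 ^ (d - 1) * X 1 ^ 2 * X 2 ^ ((d - 1) / 2) : Rk k) ∉ idlJ k d ∧
      (X 0 ^ (d - 1) * X 1 ^ 2 * X 2 ^ ((d - 1) / 2) : Rk k) ^ 2 ∈ (idlJ k d) ^ 2 := by
    rintro ⟨e, rfl⟩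
    have h2 : (2 * e + 1 - 1) / 2 = e := by omega
    rw [h2]
    exact ⟨S16.not_mem_J (by omega) (by omega) (by omega),
      S16.sq_mem_J (p := 2 * e + 1 - 3) (q := 3) (r := 1) (by omega) (by omega) (by omega)⟩
  refine ⟨?_, ?_, fun h => ⟨(HIe h).1, (HIe h).2, (HJe h).1, (HJe h).2⟩,
    fun h => ⟨(HIo h).1, (HIo h).2, (HJo h).1, (HJo h).2⟩⟩
  · rcases Nat.even_or_odd d with h | h
    · exact S16.not_closed_of (HIe h).1 (HIe h).2
    · exact S16.not_closed_of (HIo h).1 (HIo h).2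
  · rcases Nat.even_or_odd d with h | h
    · exact S16.not_closed_of (HJe h).1 (HJe h).2
    · exact S16.not_closed_of (HJo h).1 (HJo h).2
end
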